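/- Let S be an infinite subset of ℤ. For every positive integer l, the ordinary factorial l! divides the Bhargava factorial l!_S. Consequently, for every prime p, v_p(l!_S) → ∞ as l → ∞, and rad(l!_S) = o(l!_S). -/

import Mathlib

open Filter

/-- The algebraic radical: the product of the distinct prime divisors. -/
def rad (n : ℕ) : ℕ := n.primeFactors.prod id

/-- `c` is a `p`-ordering of the set `S ⊆ ℤ`. -/
def IsPOrdering (p : ℕ) (S : Set ℤ) (c : ℕ → ℤ) : Prop :=
  (∀ n, c n ∈ S) ∧
  (∀ n, ∏ k ∈ Finset.range n, (c n - c k) ≠ 0) ∧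
  (∀ n, ∀ x ∈ S,
    ∏ k ∈ Finset.range n, (x - c k) ≠ 0 →
    padicValInt p (∏ k ∈ Finset.range n, (c n - c k)) ≤
      padicValInt p (∏ k ∈ Finset.range n, (x - c k)))

/-- `F` is the Bhargava factorial function of `S`: `F l = l!_S = ∏_p p^{v_p(l;S)}`. -/
def IsBhargavaFactorial (S : Set ℤ) (F : ℕ → ℕ) : Prop :=
  (∀ l, 0 < F l) ∧
  ∀ p : ℕ, p.Prime → ∀ c : ℕ → ℤ, IsPOrdering p S c →
    ∀ l, padicValNat p (F l) = padicValInt p (∏ k ∈ Finset.range l, (c l - c k))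

namespace BhargavaAux

variable {p : ℕ}

lemma padicValInt_prod [Fact p.Prime] {ι : Type*} (s : Finset ι) (f : ι → ℤ)
    (h : ∀ i ∈ s, f i ≠ 0) :
    padicValInt p (∏ i ∈ s, f i) = ∑ i ∈ s, padicValInt p (f i) := by
  classical
  induction s using Finset.induction_on with
  | empty => simp [padicValInt.one]
  | insert x s' hx ih =>
    rw [Finset.prod_insert hx, Finset.sum_insert hx,
      padicValInt.mul (h _ (Finset.mem_insert_self _ _))
        (Finset.prod_ne_zero_iff.mpr fun i hi => h i (Finset.mem_insert_of_mem hi)),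
      ih fun i hi => h i (Finset.mem_insert_of_mem hi)]

lemma one_le_padicValInt [Fact p.Prime] {z : ℤ} (hz : z ≠ 0) (hd : (p : ℤ) ∣ z) :
    1 ≤ padicValInt p z := by
  rcases (padicValInt_dvd_iff (p := p) 1 z).mp (by simpa using hd) with h | h
  · exact absurd h hz
  · exact h

lemma val_mul_p' [hp : Fact p.Prime] {z : ℤ} (hz : z ≠ 0) :
    padicValInt p ((p : ℤ) * z) = 1 + padicValInt p z := by
  rw [padicValInt.mul (Int.natCast_ne_zero.mpr hp.out.ne_zero) hz,
    padicValInt.self hp.out.one_lt]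

lemma legendre_rec [Fact p.Prime] (n : ℕ) :
    padicValNat p n.factorial = n / p + padicValNat p (n / p).factorial := by
  conv_lhs => rw [← padicValNat_mul_div_factorial n, padicValNat_factorial_mul]
  omega

lemma val_factorial_mono [Fact p.Prime] {a b : ℕ} (h : a ≤ b) :
    padicValNat p a.factorial ≤ padicValNat p b.factorial :=
  (padicValNat_dvd_iff_le b.factorial_ne_zero).mp
    (pow_padicValNat_dvd.trans (Nat.factorial_dvd_factorial h))

lemma val_factorial_lt (hp : p.Prime) : ∀ n, 1 ≤ n → padicValNat p n.factorial < n := by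
  haveI : Fact p.Prime := ⟨hp⟩
  intro n
  induction n using Nat.strong_induction_on with
  | _ n IH =>
  intro hn
  rw [legendre_rec]
  rcases Nat.eq_zero_or_pos (n / p) with h0 | h1
  · simp [h0, Nat.factorial]; omega
  · have hq : n / p < n := Nat.div_lt_self hn hp.one_lt
    have := IH _ hq h1
    have h2 : 2 * (n / p) ≤ p * (n / p) := Nat.mul_le_mul_right _ hp.two_le
    have h3 : p * (n / p) ≤ n := Nat.mul_div_le n p
    omega

/-- Sum of p-adic valuations of `x - a k` over `k < i`. -/
def V (p : ℕ) (a : ℕ → ℤ) (i : ℕ) (x : ℤ) : ℕ :=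
  ∑ k ∈ Finset.range i, padicValInt p (x - a k)

def Distinct (a : ℕ → ℤ) (n : ℕ) : Prop :=
  ∀ ⦃k m : ℕ⦄, k < m → m ≤ n → a k ≠ a m

def SelfMin (p : ℕ) (a : ℕ → ℤ) (n : ℕ) : Prop :=
  ∀ ⦃i m : ℕ⦄, i ≤ m → m ≤ n → V p a i (a i) ≤ V p a i (a m)

lemma W_mono {a : ℕ → ℤ} {n : ℕ} (hm : SelfMin p a n) {m : ℕ} (h : m ≤ n) :
    V p a m (a m) ≤ V p a n (a n) :=
  (hm h le_rfl).trans (Finset.sum_le_sum_of_subset (Finset.range_subset_range.mpr h))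

lemma step_bound [Fact p.Prime] {a : ℕ → ℤ} {n : ℕ}
    (hd : Distinct a n) (hm : SelfMin p a n) {t : ℕ}
    (htcard : ((Finset.range n).filter (fun k => (p : ℤ) ∣ a n - a k)).card = t)
    (hmain : ∀ b : ℕ → ℤ, Distinct b t → SelfMin p b t →
      padicValNat p t.factorial ≤ V p b t (b t)) :
    t + padicValNat p t.factorial ≤ V p a n (a n) := by
  classical
  set cls : Finset ℕ := (Finset.range n).filter (fun k => (p : ℤ) ∣ a n - a k) with hclsdef
  have e : Fin t ≃o cls := cls.orderIsoOfFin htcard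
  set K : ℕ → ℕ := fun i => if h : i < t then ((e ⟨i, h⟩ : cls) : ℕ) else n with hK
  have hKmem : ∀ i (h : i < t), K i ∈ cls := by
    intro i h; simp only [hK, dif_pos h]; exact (e ⟨i, h⟩).2
  have hKltn : ∀ i, i < t → K i < n := by
    intro i h
    exact Finset.mem_range.mp (Finset.mem_filter.mp (hKmem i h)).1
  have hKt : ∀ i, t ≤ i → K i = n := by
    intro i h; simp [hK, Nat.not_lt.mpr h]
  have hKlen : ∀ i ≤ t, K i ≤ n := by
    intro i h
    rcases lt_or_eq_of_le h with h | h
    · exact (hKltn i h).le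
    · rw [hKt i h.ge]
  have hKmono : ∀ ⦃i j⦄, i < j → j ≤ t → K i < K j := by
    intro i j hij hjt
    have hit : i < t := lt_of_lt_of_le hij hjt
    rcases lt_or_eq_of_le hjt with h | h
    · have : e ⟨i, hit⟩ < e ⟨j, h⟩ := e.strictMono (by exact Fin.mk_lt_mk.mpr hij)
      simp only [hK, dif_pos hit, dif_pos h]
      exact_mod_cast this
    · rw [hKt j h.ge]; exact hKltn i hit
  have hKcls : ∀ i ≤ t, (p : ℤ) ∣ a n - a (K i) := by
    intro i h
    rcases lt_or_eq_of_le h with h | h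
    · exact (Finset.mem_filter.mp (hKmem i h)).2
    · rw [hKt i h.ge, sub_self]
      exact dvd_zero _
  have hdvdK : ∀ i ≤ t, ∀ j ≤ t, (p : ℤ) ∣ a (K i) - a (K j) := by
    intro i hi j hj
    have := dvd_sub (hKcls j hj) (hKcls i hi)
    simpa using this
  set b : ℕ → ℤ := fun i => (a (K (min i t)) - a (K 0)) / p with hb
  have hzt : 0 ≤ t := Nat.zero_le t
  have hpb : ∀ i ≤ t, (p : ℤ) * b i = a (K i) - a (K 0) := by
    intro i hi
    simp only [hb, min_eq_left hi]
    exact Int.mul_ediv_cancel' (hdvdK i hi 0 hzt)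
  have hpbij : ∀ i ≤ t, ∀ j ≤ t, (p : ℤ) * (b i - b j) = a (K i) - a (K j) := by
    intro i hi j hj
    rw [mul_sub, hpb i hi, hpb j hj]; ring
  have haKne : ∀ i ≤ t, ∀ j ≤ t, i ≠ j → a (K i) ≠ a (K j) := by
    intro i hi j hj hij
    rcases Nat.lt_or_ge i j with h | h
    · exact hd (hKmono h hj) (hKlen j hj)
    · have h' : j < i := lt_of_le_of_ne h (Ne.symm hij)
      exact fun he => hd (hKmono h' hi) (hKlen i hi) he.symm
  have hbne : ∀ i ≤ t, ∀ j ≤ t, i ≠ j → b i - b j ≠ 0 := by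
    intro i hi j hj hij h0
    have := hpbij i hi j hj
    rw [h0, mul_zero] at this
    exact haKne i hi j hj hij (by linarith)
  have hv : ∀ i ≤ t, ∀ j ≤ t, i ≠ j →
      padicValInt p (a (K i) - a (K j)) = 1 + padicValInt p (b i - b j) := by
    intro i hi j hj hij
    rw [← hpbij i hi j hj, val_mul_p' (hbne i hi j hj hij)]
  have initseg : ∀ i ≤ t,
      (Finset.range (K i)).filter (fun k => (p : ℤ) ∣ a n - a k) =
        (Finset.range i).image K := by
    intro i hi
    ext k
    simp only [Finset.mem_filter, Finset.mem_range, Finset.mem_image]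
    constructor
    · rintro ⟨hk1, hk2⟩
      have hkcls : k ∈ cls := by
        refine Finset.mem_filter.mpr ⟨Finset.mem_range.mpr ?_, hk2⟩
        exact lt_of_lt_of_le hk1 (hKlen i hi)
      set j : Fin t := e.symm ⟨k, hkcls⟩ with hj
      have hKj : K (j : ℕ) = k := by
        simp only [hK, dif_pos j.2]
        have : e ⟨(j : ℕ), j.2⟩ = ⟨k, hkcls⟩ := by
          rw [hj]; simp
        rw [this]
      refine ⟨j, ?_, hKj⟩
      by_contra hcon
      push_neg at hcon
      have : K i ≤ K (j : ℕ) := by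
        rcases lt_or_eq_of_le hcon with h | h
        · exact (hKmono h j.2.le).le
        · rw [h]
      omega
    · rintro ⟨j, hj, rfl⟩
      exact ⟨hKmono hj hi, (Finset.mem_filter.mp (hKmem j (lt_of_lt_of_le hj hi))).2⟩
  have hKinj : ∀ i ≤ t, Set.InjOn K (Finset.range i) := by
    intro i hi x hx y hy hxy
    simp only [Finset.coe_range, Set.mem_Iio] at hx hy
    by_contra hne
    rcases Nat.lt_or_ge x y with h | h
    · exact absurd hxy (hKmono h (le_trans hy.le hi)).ne
    · exact absurd hxy.symm (hKmono (lt_of_le_of_ne h (Ne.symm hne)) (le_trans hx.le hi)).ne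
  have decomp : ∀ i ≤ t, ∀ m ≤ t,
      V p a (K i) (a (K m)) = ∑ j ∈ Finset.range i, padicValInt p (a (K m) - a (K j)) := by
    intro i hi m hmt
    rw [V, ← Finset.sum_filter_add_sum_filter_not (Finset.range (K i))
      (fun k => (p : ℤ) ∣ a n - a k)]
    have hzero : ∑ k ∈ (Finset.range (K i)).filter (fun k => ¬ (p : ℤ) ∣ a n - a k),
        padicValInt p (a (K m) - a k) = 0 := by
      apply Finset.sum_eq_zero
      intro k hk
      apply padicValInt.eq_zero_of_not_dvd
      intro hdv
      have : (p : ℤ) ∣ a n - a k := by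
        have := dvd_add (hKcls m hmt) hdv
        simpa using this
      exact (Finset.mem_filter.mp hk).2 this
    rw [hzero, add_zero, initseg i hi, Finset.sum_image (hKinj i hi)]
  have hselfb : SelfMin p b t := by
    intro i m him hmt
    have hit : i ≤ t := him.trans hmt
    have hKim : K i ≤ K m := by
      rcases lt_or_eq_of_le him with h | h
      · exact (hKmono h hmt).le
      · exact le_of_eq (by rw [h])
    have h1 := hm hKim (hKlen m hmt)
    have hLHS : V p a (K i) (a (K i)) = i + V p b i (b i) := by
      rw [decomp i hit i hit]
      have : ∀ j ∈ Finset.range i, padicValInt p (a (K i) - a (K j)) =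
          1 + padicValInt p (b i - b j) := by
        intro j hj
        have hji : j < i := Finset.mem_range.mp hj
        exact hv i hit j (hji.le.trans hit) (Nat.ne_of_gt hji)
      rw [Finset.sum_congr rfl this, Finset.sum_add_distrib, Finset.sum_const,
        Finset.card_range, smul_eq_mul, mul_one, V]
    have hRHS : V p a (K i) (a (K m)) = i + V p b i (b m) := by
      rw [decomp i hit m hmt]
      have : ∀ j ∈ Finset.range i, padicValInt p (a (K m) - a (K j)) =
          1 + padicValInt p (b m - b j) := by
        intro j hj
        have hji : j < i := Finset.mem_range.mp hj
        exact hv m hmt j (hji.le.trans hit) (Nat.ne_of_gt (lt_of_lt_of_le hji him))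
      rw [Finset.sum_congr rfl this, Finset.sum_add_distrib, Finset.sum_const,
        Finset.card_range, smul_eq_mul, mul_one, V]
    rw [hLHS, hRHS] at h1
    exact le_of_add_le_add_left h1
  have hdb : Distinct b t := by
    intro k m hkm hmt hbe
    exact hbne m hmt k (hkm.le.trans hmt) (Nat.ne_of_gt hkm) (by rw [hbe]; ring)
  have hfinal : V p a n (a n) = t + V p b t (b t) := by
    have hKtt : K t = n := hKt t le_rfl
    have hdec := decomp t le_rfl t le_rfl
    rw [hKtt] at hdec
    rw [hdec]
    have hcongr : ∀ j ∈ Finset.range t, padicValInt p (a (K t) - a (K j)) =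
        1 + padicValInt p (b t - b j) := by
      intro j hj
      have hji : j < t := Finset.mem_range.mp hj
      exact hv t le_rfl j hji.le (Nat.ne_of_gt hji)
    rw [hKtt] at hcongr
    rw [Finset.sum_congr rfl hcongr, Finset.sum_add_distrib, Finset.sum_const,
      Finset.card_range, smul_eq_mul, mul_one, V]
  rw [hfinal]
  exact Nat.add_le_add_left (hmain b hdb hselfb) t

lemma main_bound (hp : p.Prime) :
    ∀ n, ∀ a : ℕ → ℤ, Distinct a n → SelfMin p a n →
      padicValNat p n.factorial ≤ V p a n (a n) := by
  haveI : Fact p.Prime := ⟨hp⟩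
  intro n
  induction n using Nat.strong_induction_on with
  | _ n IH =>
  intro a hd hm
  rcases Nat.eq_zero_or_pos n with rfl | hn
  · simp [V, Nat.factorial]
  set cls : Finset ℕ := (Finset.range n).filter (fun k => (p : ℤ) ∣ a n - a k) with hclsdef
  set t := cls.card with htdef
  have htn : t ≤ n := by
    calc t ≤ (Finset.range n).card := Finset.card_filter_le _ _
    _ = n := Finset.card_range n
  have hWt : t ≤ V p a n (a n) := by
    have h1 : ∀ k ∈ cls, 1 ≤ padicValInt p (a n - a k) := by
      intro k hk
      obtain ⟨hk1, hk2⟩ := Finset.mem_filter.mp hk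
      have hkn : k < n := Finset.mem_range.mp hk1
      refine one_le_padicValInt (sub_ne_zero.mpr ?_) hk2
      exact fun he => hd hkn le_rfl he.symm
    calc t = ∑ _k ∈ cls, 1 := by simp [htdef]
    _ ≤ ∑ k ∈ cls, padicValInt p (a n - a k) := Finset.sum_le_sum h1
    _ ≤ V p a n (a n) := Finset.sum_le_sum_of_subset (Finset.filter_subset _ _)
  by_cases hcase : t = n
  · have := val_factorial_lt hp n hn
    omega
  have htlt : t < n := lt_of_le_of_ne htn hcase
  have hleg := legendre_rec (p := p) n
  set q := n / p with hq
  by_cases hqle : q ≤ t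
  · have hsb := step_bound hd hm htdef.symm (IH t htlt)
    have := val_factorial_mono (p := p) hqle
    omega
  push_neg at hqle
  have hq1 : 1 ≤ q := by omega
  have hpq : p * q ≤ n := Nat.mul_div_le n p
  haveI : NeZero p := ⟨hp.ne_zero⟩
  set s : Finset ℕ := (Finset.range n).filter (fun k => ¬ (p : ℤ) ∣ a n - a k) with hsdef
  have hseq : s = Finset.range n \ cls := by
    ext k
    simp only [hsdef, hclsdef, Finset.mem_filter, Finset.mem_sdiff, Finset.mem_range]
    tauto
  have hscard : s.card = n - t := by
    rw [hseq, Finset.card_sdiff_of_subset (Finset.filter_subset _ _), Finset.card_range]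
  set T : Finset (ZMod p) := Finset.univ.erase ((a n : ZMod p)) with hT
  have hTcard : T.card = p - 1 := by
    rw [hT, Finset.card_erase_of_mem (Finset.mem_univ _), Finset.card_univ, ZMod.card]
  have hmaps : ∀ k ∈ s, ((a k : ZMod p)) ∈ T := by
    intro k hk
    refine Finset.mem_erase.mpr ⟨?_, Finset.mem_univ _⟩
    intro he
    have hz : ((a n - a k : ℤ) : ZMod p) = 0 := by push_cast; rw [he]; ring
    exact (Finset.mem_filter.mp hk).2 ((ZMod.intCast_zmod_eq_zero_iff_dvd _ p).mp hz)
  have hlt : T.card * q < s.card := by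
    rw [hTcard, hscard]
    have h2 : (p - 1) * q = p * q - 1 * q := Nat.sub_mul p 1 q
    omega
  obtain ⟨y, _hy, hycard⟩ := Finset.exists_lt_card_fiber_of_mul_lt_card_of_maps_to hmaps hlt
  set P : Finset ℕ := s.filter (fun k => ((a k : ZMod p)) = y) with hP
  have hPne : P.Nonempty := Finset.card_pos.mp (by omega)
  set m := P.max' hPne with hmdef
  have hmP : m ∈ P := P.max'_mem hPne
  have hmn : m < n := by
    have h1 := (Finset.mem_filter.mp hmP).1
    exact Finset.mem_range.mp (Finset.mem_filter.mp h1).1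
  set clsm : Finset ℕ := (Finset.range m).filter (fun k => (p : ℤ) ∣ a m - a k) with hclsm
  have hsub : P.erase m ⊆ clsm := by
    intro k hk
    obtain ⟨hkne, hkP⟩ := Finset.mem_erase.mp hk
    have hkm : k < m := lt_of_le_of_ne (P.le_max' k hkP) hkne
    refine Finset.mem_filter.mpr ⟨Finset.mem_range.mpr hkm, ?_⟩
    have h1 : ((a k : ZMod p)) = y := (Finset.mem_filter.mp hkP).2
    have h2 : ((a m : ZMod p)) = y := (Finset.mem_filter.mp hmP).2
    have hz : ((a m - a k : ℤ) : ZMod p) = 0 := by push_cast; rw [h1, h2]; ring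
    exact (ZMod.intCast_zmod_eq_zero_iff_dvd _ p).mp hz
  set tm := clsm.card with htm
  have hqtm : q ≤ tm := by
    have hcc := Finset.card_le_card hsub
    rw [Finset.card_erase_of_mem hmP] at hcc
    omega
  have htmn : tm < n := by
    have h1 : tm ≤ m := by
      calc tm ≤ (Finset.range m).card := Finset.card_filter_le _ _
      _ = m := Finset.card_range m
    omega
  have hd' : Distinct a m := fun k l hkl hln => hd hkl (hln.trans hmn.le)
  have hm' : SelfMin p a m := fun i l hil hln => hm hil (hln.trans hmn.le)
  have hsb := step_bound hd' hm' htm.symm (IH tm htmn)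
  have hmono := val_factorial_mono (p := p) hqtm
  have hWm : V p a m (a m) ≤ V p a n (a n) := W_mono hm hmn.le
  omega

/-! ### Construction of a p-ordering -/

def vset (p : ℕ) (S : Set ℤ) (c : ℕ → ℤ) (n : ℕ) : Set ℕ :=
  {v | ∃ x, (x ∈ S ∧ ∀ k < n, x ≠ c k) ∧
    padicValInt p (∏ k ∈ Finset.range n, (x - c k)) = v}

lemma vset_nonempty {S : Set ℤ} (hS : S.Infinite) (p : ℕ) (c : ℕ → ℤ) (n : ℕ) :
    (vset p S c n).Nonempty := by
  obtain ⟨x, hx⟩ := (hS.diff ((Set.finite_Iio n).image c)).nonempty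
  exact ⟨_, x, ⟨hx.1, fun k hk hek => hx.2 ⟨k, hk, hek.symm⟩⟩, rfl⟩

lemma pstep_ex (p : ℕ) (S : Set ℤ) (hS : S.Infinite) (c : ℕ → ℤ) (n : ℕ) :
    ∃ x : ℤ, (x ∈ S ∧ ∀ k < n, x ≠ c k) ∧
      padicValInt p (∏ k ∈ Finset.range n, (x - c k)) = sInf (vset p S c n) :=
  Nat.sInf_mem (vset_nonempty hS p c n)

noncomputable def pstep (p : ℕ) (S : Set ℤ) (hS : S.Infinite) (c : ℕ → ℤ) (n : ℕ) : ℤ :=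
  (pstep_ex p S hS c n).choose

lemma pstep_spec (p : ℕ) (S : Set ℤ) (hS : S.Infinite) (c : ℕ → ℤ) (n : ℕ) :
    (pstep p S hS c n ∈ S ∧ ∀ k < n, pstep p S hS c n ≠ c k) ∧
      padicValInt p (∏ k ∈ Finset.range n, (pstep p S hS c n - c k)) =
        sInf (vset p S c n) :=
  (pstep_ex p S hS c n).choose_spec

noncomputable def greedy (p : ℕ) (S : Set ℤ) (hS : S.Infinite) (n : ℕ) : ℤ :=
  pstep p S hS (fun k => if h : k < n then greedy p S hS k else 0) n
termination_by n
decreasing_by exact h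

lemma greedy_isPOrdering (p : ℕ) (S : Set ℤ) (hS : S.Infinite) :
    IsPOrdering p S (greedy p S hS) := by
  set c := greedy p S hS with hc
  have key : ∀ n, c n ∈ S ∧ (∀ k < n, c n ≠ c k) ∧
      (∀ x ∈ S, (∀ k < n, x ≠ c k) →
        padicValInt p (∏ k ∈ Finset.range n, (c n - c k)) ≤
          padicValInt p (∏ k ∈ Finset.range n, (x - c k))) := by
    intro n
    set c' : ℕ → ℤ := fun k => if h : k < n then c k else 0 with hc'
    have hceq : c n = pstep p S hS c' n := by
      conv_lhs => rw [hc, greedy]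
    have hprod : ∀ x : ℤ,
        ∏ k ∈ Finset.range n, (x - c' k) = ∏ k ∈ Finset.range n, (x - c k) :=
      fun x => Finset.prod_congr rfl fun k hk => by
        simp [hc', Finset.mem_range.mp hk]
    obtain ⟨⟨hxS, hxne⟩, hval⟩ := pstep_spec p S hS c' n
    rw [← hceq] at hxS hxne hval
    refine ⟨hxS, ?_, ?_⟩
    · intro k hk
      simpa [hc', hk] using hxne k hk
    · intro x hxS' hxd
      rw [← hprod (c n), hval]
      apply Nat.sInf_le
      exact ⟨x, ⟨hxS', fun k hk => by simpa [hc', hk] using hxd k hk⟩, by rw [hprod x]⟩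
  refine ⟨fun n => (key n).1, fun n => ?_, fun n x hx hpr => ?_⟩
  · exact Finset.prod_ne_zero_iff.mpr fun k hk =>
      sub_ne_zero.mpr ((key n).2.1 k (Finset.mem_range.mp hk))
  · refine (key n).2.2 x hx fun k hk => ?_
    have := Finset.prod_ne_zero_iff.mp hpr k (Finset.mem_range.mpr hk)
    exact fun he => this (sub_eq_zero.mpr he)

lemma isPOrdering_distinct {S : Set ℤ} {c : ℕ → ℤ} (h : IsPOrdering p S c) (n : ℕ) :
    Distinct c n := by
  intro k m hkm _ he
  have h2 := Finset.prod_ne_zero_iff.mp (h.2.1 m) k (Finset.mem_range.mpr hkm)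
  exact h2 (by rw [he]; ring)

lemma isPOrdering_selfMin (hp : p.Prime) {S : Set ℤ} {c : ℕ → ℤ}
    (h : IsPOrdering p S c) (n : ℕ) : SelfMin p c n := by
  haveI : Fact p.Prime := ⟨hp⟩
  intro i m him _
  rcases eq_or_lt_of_le him with rfl | hlt
  · exact le_rfl
  have hne : ∀ k < m, c m ≠ c k := fun k hk he =>
    Finset.prod_ne_zero_iff.mp (h.2.1 m) k (Finset.mem_range.mpr hk) (sub_eq_zero.mpr he)
  have hprod_i : ∏ k ∈ Finset.range i, (c i - c k) ≠ 0 :=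
    Finset.prod_ne_zero_iff.mpr fun k hk =>
      Finset.prod_ne_zero_iff.mp (h.2.1 i) k hk
  have hprod_mi : ∏ k ∈ Finset.range i, (c m - c k) ≠ 0 :=
    Finset.prod_ne_zero_iff.mpr fun k hk =>
      sub_ne_zero.mpr (hne k (lt_of_lt_of_le (Finset.mem_range.mp hk) him))
  have h3 := h.2.2 i (c m) (h.1 m) hprod_mi
  rwa [padicValInt_prod _ _ (fun k hk => Finset.prod_ne_zero_iff.mp hprod_i k hk),
    padicValInt_prod _ _ (fun k hk => Finset.prod_ne_zero_iff.mp hprod_mi k hk)] at h3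

lemma val_fact_le_val_F {S : Set ℤ} {F : ℕ → ℕ} (hS : S.Infinite)
    (hF : IsBhargavaFactorial S F) {p : ℕ} (hp : p.Prime) (l : ℕ) :
    padicValNat p l.factorial ≤ padicValNat p (F l) := by
  haveI : Fact p.Prime := ⟨hp⟩
  have hc := greedy_isPOrdering p S hS
  set c := greedy p S hS with hcdef
  rw [hF.2 p hp c hc l]
  have hne : ∀ k ∈ Finset.range l, c l - c k ≠ 0 :=
    fun k hk => Finset.prod_ne_zero_iff.mp (hc.2.1 l) k hk
  rw [padicValInt_prod _ _ hne]
  exact main_bound hp l c (isPOrdering_distinct hc l) (isPOrdering_selfMin hp hc l)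

end BhargavaAux

open BhargavaAux in
theorem factorial_dvd_bhargava_factorial
    (S : Set ℤ) (hS : S.Infinite) (F : ℕ → ℕ) (hF : IsBhargavaFactorial S F) :
    (∀ l, Nat.factorial l ∣ F l) ∧
    (∀ p : ℕ, p.Prime →
      Tendsto (fun l => padicValNat p (F l)) atTop atTop) ∧
    Tendsto (fun l => (rad (F l) : ℝ) / (F l : ℝ)) atTop (nhds 0) := by
  have hdvd : ∀ l, Nat.factorial l ∣ F l := by
    intro l
    refine (Nat.factorization_prime_le_iff_dvd l.factorial_ne_zero (hF.1 l).ne').mp ?_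
    intro q hq
    rw [Nat.factorization_def _ hq, Nat.factorization_def _ hq]
    exact val_fact_le_val_F hS hF hq l
  have htend : ∀ q : ℕ, q.Prime → Tendsto (fun l => padicValNat q (F l)) atTop atTop := by
    intro q hq
    haveI : Fact q.Prime := ⟨hq⟩
    have h1 : Tendsto (fun l : ℕ => l / q) atTop atTop := by
      apply Filter.tendsto_atTop_atTop.mpr
      intro b
      refine ⟨q * b, fun l hl => ?_⟩
      exact (Nat.le_div_iff_mul_le hq.pos).mpr (by rwa [Nat.mul_comm q b] at hl)
    apply Filter.tendsto_atTop_mono _ h1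
    intro l
    calc l / q ≤ padicValNat q l.factorial := by rw [legendre_rec]; omega
    _ ≤ padicValNat q (F l) := val_fact_le_val_F hS hF hq l
  refine ⟨hdvd, htend, ?_⟩
  have h2 := htend 2 Nat.prime_two
  have hbound : ∀ l, 1 ≤ padicValNat 2 (F l) →
      (rad (F l) : ℝ) / (F l : ℝ) ≤ (1/2 : ℝ) ^ (padicValNat 2 (F l) - 1) := by
    intro l hl
    set m := F l with hmdef
    set v := padicValNat 2 m with hvdef
    have hm0 : 0 < m := hF.1 l
    have hv : m.factorization 2 = v := Nat.factorization_def m Nat.prime_two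
    have hrad : rad m ∣ 2 * ordCompl[2] m := by
      refine Finset.prod_primes_dvd _ (fun r hr => ?_) (fun r hr => ?_)
      · exact (Nat.prime_of_mem_primeFactors hr).prime
      · rcases eq_or_ne r 2 with rfl | hne
        · exact dvd_mul_right 2 _
        · refine Dvd.dvd.mul_left ?_ 2
          apply Nat.dvd_of_factorization_pos
          rw [Nat.factorization_ordCompl, Finsupp.erase_ne hne]
          have hpos := Nat.Prime.factorization_pos_of_dvd
            (Nat.prime_of_mem_primeFactors hr) hm0.ne'
            (Nat.dvd_of_mem_primeFactors hr)
          omega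
    have hdvd2 : rad m * 2 ^ (v - 1) ∣ m := by
      have hstep : rad m * 2 ^ (v - 1) ∣ (2 * ordCompl[2] m) * 2 ^ (v - 1) :=
        mul_dvd_mul hrad dvd_rfl
      refine hstep.trans (dvd_of_eq ?_)
      have h21 : 2 * 2 ^ (v - 1) = 2 ^ v := by
        rw [← pow_succ']
        congr 1
        omega
      calc 2 * ordCompl[2] m * 2 ^ (v - 1) = (2 * 2 ^ (v - 1)) * ordCompl[2] m := by ring
      _ = 2 ^ v * ordCompl[2] m := by rw [h21]
      _ = m := by rw [← hv]; exact Nat.ordProj_mul_ordCompl_eq_self m 2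
    have hle : (rad m : ℝ) * 2 ^ (v - 1) ≤ (m : ℝ) := by
      exact_mod_cast Nat.le_of_dvd hm0 hdvd2
    have hm0' : (0 : ℝ) < (m : ℝ) := by exact_mod_cast hm0
    have hp0 : (0 : ℝ) < 2 ^ (v - 1) := by positivity
    rw [div_pow, one_pow, div_le_div_iff₀ hm0' hp0, one_mul]
    exact hle
  have hsub : Tendsto (fun l => padicValNat 2 (F l) - 1) atTop atTop := by
    apply Filter.tendsto_atTop_atTop.mpr
    intro b
    obtain ⟨N, hN⟩ := Filter.tendsto_atTop_atTop.mp h2 (b + 1)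
    exact ⟨N, fun l hl => by have := hN l hl; omega⟩
  have hg : Tendsto (fun l => (1/2 : ℝ) ^ (padicValNat 2 (F l) - 1)) atTop (nhds 0) :=
    (tendsto_pow_atTop_nhds_zero_of_lt_one (by norm_num) (by norm_num)).comp hsub
  apply squeeze_zero' (g := fun l => (1/2 : ℝ) ^ (padicValNat 2 (F l) - 1))
    (Filter.Eventually.of_forall fun l => by positivity) ?_ hg
  filter_upwards [h2.eventually_ge_atTop 1] with l hl
  exact hbound l hl
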